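/- For every integer T ≥ 1 and every x ∈ ℝ^T, the gradient of f̂_T is uniformly bounded in the supremum norm: ‖∇ f̂_T(x)‖_∞ ≤ 23. -/

import Mathlib

/-- Ψ(z) = 0 for z ≤ 1/2 and Ψ(z) = exp(1 − 1/(2z−1)²) for z > 1/2. -/
noncomputable def Psi (z : ℝ) : ℝ :=
  if z ≤ 1/2 then 0 else Real.exp (1 - 1/(2*z - 1)^2)

/-- Φ(z) = √e ∫_{−∞}^{z} exp(−t²/2) dt. -/
noncomputable def Phi (z : ℝ) : ℝ :=
  Real.sqrt (Real.exp 1) * ∫ t in Set.Iic z, Real.exp (-t^2/2)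

/-- The 1-based `i`-th coordinate of `x` (junk value 0 out of range): `coord x i = x_{i+1}`
in 0-based terms. -/
noncomputable def coord {T : ℕ} (x : EuclideanSpace ℝ (Fin T)) (i : ℕ) : ℝ :=
  if h : i < T then x ⟨i, h⟩ else 0

/-- f̂_T(x) = −Ψ(1)Φ(x₁) + Σ_{i=1}^{T−1} [Ψ(−x_i)Φ(−x_{i+1}) − Ψ(x_i)Φ(x_{i+1})],
where the 1-based coordinate x_i is `coord x (i-1)`. -/
noncomputable def fhat (T : ℕ) (x : EuclideanSpace ℝ (Fin T)) : ℝ :=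
  -(Psi 1) * Phi (coord x 0) +
    ∑ i ∈ Finset.Ico 1 T,
      (Psi (-(coord x (i-1))) * Phi (-(coord x i)) - Psi (coord x (i-1)) * Phi (coord x i))


set_option maxHeartbeats 1000000

noncomputable def Psi' (z : ℝ) : ℝ :=
  if z ≤ 1/2 then 0 else Psi z * (4/(2*z - 1)^3)

noncomputable def Phi' (z : ℝ) : ℝ := Real.sqrt (Real.exp 1) * Real.exp (-z^2/2)

lemma qfun_hasDerivAt (z : ℝ) :
    HasDerivAt (fun z : ℝ => (2*z-1) * max (2*z-1) 0) (if z ≤ 1/2 then 0 else 8*z-4) z := by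
  rcases lt_trichotomy z (1/2) with hz | hz | hz
  · rw [if_pos hz.le]
    refine (hasDerivAt_const z 0).congr_of_eventuallyEq ?_
    filter_upwards [gt_mem_nhds hz] with y hy
    rw [max_eq_right (by linarith), mul_zero]
  · subst hz
    rw [if_pos le_rfl]
    rw [hasDerivAt_iff_isLittleO]
    rw [Asymptotics.isLittleO_iff]
    intro c hc
    filter_upwards [Metric.ball_mem_nhds (1/2 : ℝ) (by positivity : (0:ℝ) < c/4)] with y hy
    rw [Metric.mem_ball, Real.dist_eq] at hy
    have h1 : |max (2*y-1) 0| ≤ |2*y-1| := by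
      rw [abs_of_nonneg (le_max_right _ _)]
      exact max_le (le_abs_self _) (abs_nonneg _)
    have h2 : |2*y - 1| = 2 * |y - 1/2| := by
      rw [show (2*y - 1 : ℝ) = 2*(y - 1/2) by ring, abs_mul]
      norm_num
    simp only [smul_zero, sub_zero]
    have key : |(2*y-1) * max (2*y-1) 0| ≤ 4 * |y-1/2| * |y-1/2| := by
      calc |(2*y-1) * max (2*y-1) 0| = |2*y-1| * |max (2*y-1) 0| := abs_mul _ _
        _ ≤ |2*y-1| * |2*y-1| := by nlinarith [abs_nonneg (2*y-1)]
        _ = 4 * |y-1/2| * |y-1/2| := by rw [h2]; ring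
    have hz0 : (2*(1/2:ℝ)-1) * max (2*(1/2:ℝ)-1) 0 = 0 := by norm_num
    rw [Real.norm_eq_abs, Real.norm_eq_abs, hz0, sub_zero]
    nlinarith [abs_nonneg (y - 1/2)]
  · rw [if_neg (not_le.2 hz)]
    have hc : HasDerivAt (fun y : ℝ => 2*y-1) 2 z := by
      simpa using ((hasDerivAt_id z).const_mul 2).sub_const 1
    have h : HasDerivAt (fun y : ℝ => (2*y-1)^2) (8*z-4) z := by
      have := hc.fun_pow 2
      exact this.congr_deriv (by ring)
    refine h.congr_of_eventuallyEq ?_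
    filter_upwards [lt_mem_nhds hz] with y hy
    rw [max_eq_left (by linarith)]
    ring

lemma psi_eq (z : ℝ) : Psi z = Real.exp 1 * expNegInvGlue ((2*z-1) * max (2*z-1) 0) := by
  unfold Psi
  rcases le_or_gt z (1/2) with h | h
  · rw [if_pos h, max_eq_right (by linarith), mul_zero, expNegInvGlue.zero, mul_zero]
  · rw [if_neg (not_le.2 h), max_eq_left (by linarith)]
    have hu : (0:ℝ) < 2*z-1 := by linarith
    rw [expNegInvGlue, if_neg (by nlinarith : ¬ (2*z-1) * (2*z-1) ≤ 0), ← Real.exp_add]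
    congr 1
    have h2 : (2*z-1) * (2*z-1) = (2*z-1)^2 := by ring
    rw [h2]
    ring

lemma psi_hasDerivAt (z : ℝ) : HasDerivAt Psi (Psi' z) z := by
  have hq := qfun_hasDerivAt z
  set qz := (2*z-1) * max (2*z-1) 0 with hqz
  have hE : HasDerivAt expNegInvGlue ((qz⁻¹)^2 * expNegInvGlue qz) qz := by
    simpa using expNegInvGlue.hasDerivAt_polynomial_eval_inv_mul 1 qz
  have hcomp := (hE.comp z hq).const_mul (Real.exp 1)
  have heq : HasDerivAt Psi (Real.exp 1 * ((qz⁻¹)^2 * expNegInvGlue qz * (if z ≤ 1/2 then 0 else 8*z-4))) z := by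
    refine hcomp.congr_of_eventuallyEq (Filter.Eventually.of_forall fun y => ?_)
    exact psi_eq y
  convert heq using 1
  rcases le_or_gt z (1/2) with h | h
  · rw [Psi', if_pos h, if_pos h, mul_zero, mul_zero]
  · rw [Psi', if_neg (not_le.2 h), if_neg (not_le.2 h)]
    have hu : (0:ℝ) < 2*z-1 := by linarith
    have hmax : max (2*z-1) 0 = 2*z-1 := max_eq_left hu.le
    have hqzpos : (0:ℝ) < qz := by rw [hqz, hmax]; nlinarith
    rw [Psi, if_neg (not_le.2 h)]
    rw [hqz, hmax]
    rw [expNegInvGlue, if_neg (by nlinarith : ¬ (2*z-1) * (2*z-1) ≤ 0)]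
    rw [show (1 - 1/(2*z-1)^2 : ℝ) = 1 + -(((2*z-1)*(2*z-1))⁻¹) by field_simp; ring, Real.exp_add]
    field_simp
    ring


lemma psi_zero {z : ℝ} (h : z ≤ 1/2) : Psi z = 0 := if_pos h
lemma psi'_zero {z : ℝ} (h : z ≤ 1/2) : Psi' z = 0 := if_pos h

lemma psi_nonneg (z : ℝ) : 0 ≤ Psi z := by
  rw [Psi]; split_ifs
  · exact le_refl 0
  · exact (Real.exp_pos _).le

lemma psi_le (z : ℝ) : Psi z ≤ 2.7183 := by
  have he : Real.exp 1 ≤ 2.7182818286 := Real.exp_one_lt_d9.le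
  rw [Psi]; split_ifs with h
  · norm_num
  · calc Real.exp (1 - 1/(2*z-1)^2) ≤ Real.exp 1 := by
          apply Real.exp_le_exp.2
          have : (0:ℝ) ≤ 1/(2*z-1)^2 := by positivity
          linarith
      _ ≤ 2.7183 := by linarith

lemma psi'_nonneg (z : ℝ) : 0 ≤ Psi' z := by
  rw [Psi']; split_ifs with h
  · exact le_refl 0
  · have hu : (0:ℝ) < 2*z-1 := by linarith [not_le.1 h]
    have : (0:ℝ) < Psi z := by rw [Psi, if_neg h]; exact Real.exp_pos _
    positivity

lemma psi'_le (z : ℝ) : Psi' z ≤ 4.458 := by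
  rw [Psi']; split_ifs with h
  · norm_num
  · have hu : (0:ℝ) < 2*z-1 := by linarith [not_le.1 h]
    set u := 2*z-1 with hudef
    set t := 1/u^2 with htdef
    have ht : 0 < t := by positivity
    have key1 : t ≤ 3/2 * Real.exp ((2*t-3)/3) := by
      nlinarith [Real.add_one_le_exp ((2*t-3)/3)]
    have key2 : t^3 ≤ 27/8 * Real.exp (2*t-3) := by
      have h3 : (3/2 * Real.exp ((2*t-3)/3))^3 = 27/8 * Real.exp (2*t-3) := by
        rw [show (2*t-3 : ℝ) = ((2*t-3)/3) + (((2*t-3)/3) + ((2*t-3)/3)) by ring,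
          Real.exp_add, Real.exp_add]
        ring
      calc t^3 ≤ (3/2 * Real.exp ((2*t-3)/3))^3 := by
            apply pow_le_pow_left₀ ht.le key1
        _ = _ := h3
    have hPsiz : Psi z = Real.exp (1 - t) := by
      rw [Psi, if_neg h, htdef]
    have hexp2 : Real.exp (1-t) * Real.exp (1-t) = Real.exp 2 * Real.exp (-(2*t)) := by
      rw [← Real.exp_add, ← Real.exp_add]; ring_nf
    have hprod : Real.exp 2 * Real.exp (-(2*t)) * Real.exp (2*t-3) = Real.exp (-1) := by
      rw [← Real.exp_add, ← Real.exp_add]; congr 1; ring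
    have hexpneg1 : Real.exp (-1) ≤ 0.36788 := by
      rw [Real.exp_neg]
      rw [inv_le_comm₀ (Real.exp_pos 1) (by norm_num)]
      calc (0.36788:ℝ)⁻¹ ≤ 2.71828 := by norm_num
        _ ≤ Real.exp 1 := by linarith [Real.exp_one_gt_d9]
    have hut : (4/u^3)^2 = 16 * t^3 := by
      rw [htdef]; field_simp; ring
    have hsq : (Psi z * (4/u^3))^2 ≤ 19.87 := by
      have expand : (Psi z * (4/u^3))^2 = (Real.exp 2 * Real.exp (-(2*t))) * (16 * t^3) := by
        rw [hPsiz, mul_pow, hut, sq, hexp2]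
      rw [expand]
      have hA : (0:ℝ) < Real.exp 2 * Real.exp (-(2*t)) := by positivity
      have step : (Real.exp 2 * Real.exp (-(2*t))) * (16 * t^3) ≤
          (Real.exp 2 * Real.exp (-(2*t))) * (16 * (27/8 * Real.exp (2*t-3))) := by
        apply mul_le_mul_of_nonneg_left _ hA.le
        nlinarith
      have simp2 : (Real.exp 2 * Real.exp (-(2*t))) * (16 * (27/8 * Real.exp (2*t-3)))
          = 54 * Real.exp (-1) := by
        calc (Real.exp 2 * Real.exp (-(2*t))) * (16 * (27/8 * Real.exp (2*t-3)))
            = 54 * (Real.exp 2 * Real.exp (-(2*t)) * Real.exp (2*t-3)) := by ring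
          _ = 54 * Real.exp (-1) := by rw [hprod]
      rw [simp2] at step
      linarith
    have hpos : 0 ≤ Psi z * (4/u^3) := by
      have : (0:ℝ) < Psi z := by rw [hPsiz]; exact Real.exp_pos _
      positivity
    nlinarith


open MeasureTheory

lemma gauss_integrable : Integrable (fun t : ℝ => Real.exp (-t^2/2)) := by
  have h2 : ∀ t : ℝ, -(1/2:ℝ) * t^2 = -t^2/2 := fun t => by ring
  simpa only [h2] using integrable_exp_neg_mul_sq (by norm_num : (0:ℝ) < 1/2)

lemma gauss_continuous : Continuous (fun t : ℝ => Real.exp (-t^2/2)) := by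
  continuity

lemma phi_hasDerivAt (z : ℝ) : HasDerivAt Phi (Phi' z) z := by
  have key : ∀ y : ℝ, Phi y = Real.sqrt (Real.exp 1) *
      ((∫ t in Set.Iic (0:ℝ), Real.exp (-t^2/2)) + ∫ t in (0:ℝ)..y, Real.exp (-t^2/2)) := by
    intro y
    rw [Phi, ← intervalIntegral.integral_Iic_sub_Iic gauss_integrable.integrableOn
      gauss_integrable.integrableOn]
    ring
  have h1 : HasDerivAt (fun y : ℝ => ∫ t in (0:ℝ)..y, Real.exp (-t^2/2)) (Real.exp (-z^2/2)) z :=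
    intervalIntegral.integral_hasDerivAt_right (gauss_integrable.intervalIntegrable)
      (gauss_continuous.stronglyMeasurableAtFilter _ _) gauss_continuous.continuousAt
  have h2 := (h1.const_add ((∫ t in Set.Iic (0:ℝ), Real.exp (-t^2/2)))).const_mul
    (Real.sqrt (Real.exp 1))
  exact h2.congr_of_eventuallyEq (Filter.Eventually.of_forall fun y => key y)

lemma sqrt_e_le : Real.sqrt (Real.exp 1) ≤ 1.6488 := by
  have he : Real.exp 1 ≤ 2.7182818286 := Real.exp_one_lt_d9.le
  nlinarith [Real.sq_sqrt (Real.exp_pos 1).le, Real.sqrt_nonneg (Real.exp 1)]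

lemma phi_nonneg (z : ℝ) : 0 ≤ Phi z := by
  apply mul_nonneg (Real.sqrt_nonneg _)
  exact setIntegral_nonneg measurableSet_Iic fun t _ => (Real.exp_pos _).le

lemma phi_le (z : ℝ) : Phi z ≤ 4.1331 := by
  have h1 : (∫ t in Set.Iic z, Real.exp (-t^2/2)) ≤ ∫ t : ℝ, Real.exp (-t^2/2) :=
    setIntegral_le_integral gauss_integrable
      (Filter.Eventually.of_forall fun t => (Real.exp_pos _).le)
  have h2 : (∫ t : ℝ, Real.exp (-t^2/2)) = Real.sqrt (Real.pi / (1/2)) := by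
    have h3 : ∀ t : ℝ, -(1/2:ℝ) * t^2 = -t^2/2 := fun t => by ring
    simpa only [h3] using integral_gaussian (1/2 : ℝ)
  have hpi : Real.pi < 3.141593 := Real.pi_lt_d6
  have h4 : Real.sqrt (Real.pi / (1/2)) ≤ 2.5067 := by
    nlinarith [Real.sq_sqrt (by positivity : (0:ℝ) ≤ Real.pi / (1/2)),
      Real.sqrt_nonneg (Real.pi / (1/2)), Real.pi_gt_three]
  have h5 : (∫ t in Set.Iic z, Real.exp (-t^2/2)) ≤ 2.5067 := by
    rw [h2] at h1; linarith
  have h6 : (0:ℝ) ≤ ∫ t in Set.Iic z, Real.exp (-t^2/2) :=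
    setIntegral_nonneg measurableSet_Iic fun t _ => (Real.exp_pos _).le
  calc Phi z ≤ 1.6488 * 2.5067 := by
        rw [Phi]
        apply mul_le_mul sqrt_e_le h5 h6 (by norm_num)
    _ ≤ 4.1331 := by norm_num

lemma phi'_nonneg (z : ℝ) : 0 ≤ Phi' z :=
  mul_nonneg (Real.sqrt_nonneg _) (Real.exp_pos _).le

lemma phi'_le (z : ℝ) : Phi' z ≤ 1.6488 := by
  have h1 : Real.exp (-z^2/2) ≤ 1 := Real.exp_le_one_iff.2 (by nlinarith [sq_nonneg z])
  calc Phi' z ≤ Real.sqrt (Real.exp 1) * 1 :=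
        mul_le_mul_of_nonneg_left h1 (Real.sqrt_nonneg _)
    _ ≤ 1.6488 := by rw [mul_one]; exact sqrt_e_le


lemma pair1 (a b : ℝ) : |Phi (-b) * Psi' (-a) + Phi b * Psi' a| ≤ 18.43 := by
  rcases le_or_gt a (1/2) with h | h
  · rw [psi'_zero h, mul_zero, add_zero, abs_mul, abs_of_nonneg (phi_nonneg _),
      abs_of_nonneg (psi'_nonneg _)]
    nlinarith [phi_le (-b), psi'_le (-a), phi_nonneg (-b), psi'_nonneg (-a)]
  · rw [psi'_zero (show -a ≤ 1/2 by linarith), mul_zero, zero_add, abs_mul,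
      abs_of_nonneg (phi_nonneg _), abs_of_nonneg (psi'_nonneg _)]
    nlinarith [phi_le b, psi'_le a, phi_nonneg b, psi'_nonneg a]

lemma pair2 (a b : ℝ) : |Psi (-a) * Phi' (-b) + Psi a * Phi' b| ≤ 4.482 := by
  rcases le_or_gt a (1/2) with h | h
  · rw [psi_zero h, zero_mul, add_zero, abs_mul, abs_of_nonneg (psi_nonneg _),
      abs_of_nonneg (phi'_nonneg _)]
    nlinarith [psi_le (-a), phi'_le (-b), psi_nonneg (-a), phi'_nonneg (-b)]
  · rw [psi_zero (show -a ≤ 1/2 by linarith), zero_mul, zero_add, abs_mul,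
      abs_of_nonneg (psi_nonneg _), abs_of_nonneg (phi'_nonneg _)]
    nlinarith [psi_le a, phi'_le b, psi_nonneg a, phi'_nonneg b]


lemma psi_one : Psi 1 = 1 := by norm_num [Psi]

lemma term_bound (a b d1 d2 : ℝ) (h1 : d1 = 0 ∨ d1 = 1) (h2 : d2 = 0 ∨ d2 = 1) :
    |Psi (-a) * (Phi' (-b) * -d2) + Phi (-b) * (Psi' (-a) * -d1) -
      (Psi a * (Phi' b * d2) + Phi b * (Psi' a * d1))| ≤ 18.43 * d1 + 4.482 * d2 := by
  have hrw : Psi (-a) * (Phi' (-b) * -d2) + Phi (-b) * (Psi' (-a) * -d1) -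
      (Psi a * (Phi' b * d2) + Phi b * (Psi' a * d1)) =
      (-(d2 * (Psi (-a) * Phi' (-b) + Psi a * Phi' b))) +
      (-(d1 * (Phi (-b) * Psi' (-a) + Phi b * Psi' a))) := by ring
  rw [hrw]
  refine (abs_add_le _ _).trans ?_
  rw [abs_neg, abs_neg, abs_mul, abs_mul]
  rcases h1 with h1 | h1 <;> rcases h2 with h2 | h2 <;>
    simp only [h1, h2, abs_zero, abs_one, zero_mul, one_mul, mul_zero, mul_one, add_zero, zero_add] <;>
    [norm_num; (linarith [pair2 a b]); (linarith [pair1 a b]); (linarith [pair1 a b, pair2 a b])]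

noncomputable def Pk (T : ℕ) (k : ℕ) : EuclideanSpace ℝ (Fin T) →L[ℝ] ℝ :=
  if h : k < T then EuclideanSpace.proj (⟨k, h⟩ : Fin T) else 0

/-- The gradient of f̂_T is uniformly bounded in the supremum norm: ‖∇f̂_T(x)‖_∞ ≤ 23,
i.e. every partial derivative has absolute value at most 23. -/
theorem fhat_grad_sup_bound (T : ℕ) (hT : 1 ≤ T) (x : EuclideanSpace ℝ (Fin T))
    (j : Fin T) : |gradient (fhat T) x j| ≤ 23 := by
  classical
  set v : EuclideanSpace ℝ (Fin T) := EuclideanSpace.single j 1 with hv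
  have hPk : ∀ k : ℕ, HasFDerivAt (fun y : EuclideanSpace ℝ (Fin T) => coord y k) (Pk T k) x := by
    intro k
    by_cases h : k < T
    · rw [Pk, dif_pos h]
      have hp : HasFDerivAt (𝕜 := ℝ) (⇑(EuclideanSpace.proj (⟨k, h⟩ : Fin T)))
          (EuclideanSpace.proj (⟨k, h⟩ : Fin T)) x := ContinuousLinearMap.hasFDerivAt _
      refine hp.congr_of_eventuallyEq ?_
      exact Filter.Eventually.of_forall fun y => by simp [coord, h]
    · rw [Pk, dif_neg h]
      refine (hasFDerivAt_const 0 x).congr_of_eventuallyEq ?_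
      exact Filter.Eventually.of_forall fun y => by simp [coord, h]
  have hPkv : ∀ k : ℕ, (Pk T k) v = (if k = (j:ℕ) then (1:ℝ) else 0) := by
    intro k
    by_cases h : k < T
    · rw [Pk, dif_pos h, hv]
      simp [EuclideanSpace.single_apply, Fin.ext_iff]
    · have hne : ¬ (k = (j:ℕ)) := by have := j.isLt; omega
      rw [Pk, dif_neg h, if_neg hne]
      rfl
  have hL0 : HasFDerivAt (fun y : EuclideanSpace ℝ (Fin T) => -(Psi 1) * Phi (coord y 0))
      ((-(Psi 1)) • (Phi' (coord x 0) • Pk T 0)) x := by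
    have := ((phi_hasDerivAt (coord x 0)).comp_hasFDerivAt x (hPk 0)).const_mul (-(Psi 1))
    exact this
  have hLi : ∀ i : ℕ, HasFDerivAt
      (fun y : EuclideanSpace ℝ (Fin T) =>
        Psi (-(coord y (i-1))) * Phi (-(coord y i)) - Psi (coord y (i-1)) * Phi (coord y i))
      ((Psi (-(coord x (i-1))) • (Phi' (-(coord x i)) • -(Pk T i)) +
        Phi (-(coord x i)) • (Psi' (-(coord x (i-1))) • -(Pk T (i-1)))) -
       (Psi (coord x (i-1)) • (Phi' (coord x i) • Pk T i) +
        Phi (coord x i) • (Psi' (coord x (i-1)) • Pk T (i-1)))) x := by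
    intro i
    have h1 := (psi_hasDerivAt (-(coord x (i-1)))).comp_hasFDerivAt x (hPk (i-1)).neg
    have h2 := (phi_hasDerivAt (-(coord x i))).comp_hasFDerivAt x (hPk i).neg
    have h3 := (psi_hasDerivAt (coord x (i-1))).comp_hasFDerivAt x (hPk (i-1))
    have h4 := (phi_hasDerivAt (coord x i)).comp_hasFDerivAt x (hPk i)
    have := (h1.mul h2).sub (h3.mul h4)
    simpa [Function.comp_def, mul_comm, Pi.mul_def, Pi.sub_def] using this
  have hfhat : HasFDerivAt (fhat T)
      ((-(Psi 1)) • (Phi' (coord x 0) • Pk T 0) + ∑ i ∈ Finset.Ico 1 T,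
        ((Psi (-(coord x (i-1))) • (Phi' (-(coord x i)) • -(Pk T i)) +
          Phi (-(coord x i)) • (Psi' (-(coord x (i-1))) • -(Pk T (i-1)))) -
         (Psi (coord x (i-1)) • (Phi' (coord x i) • Pk T i) +
          Phi (coord x i) • (Psi' (coord x (i-1)) • Pk T (i-1))))) x := by
    unfold fhat
    exact hL0.add (HasFDerivAt.fun_sum fun i _ => hLi i)
  have hgradeq : gradient (fhat T) x j =
      ((-(Psi 1)) • (Phi' (coord x 0) • Pk T 0) + ∑ i ∈ Finset.Ico 1 T,
        ((Psi (-(coord x (i-1))) • (Phi' (-(coord x i)) • -(Pk T i)) +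
          Phi (-(coord x i)) • (Psi' (-(coord x (i-1))) • -(Pk T (i-1)))) -
         (Psi (coord x (i-1)) • (Phi' (coord x i) • Pk T i) +
          Phi (coord x i) • (Psi' (coord x (i-1)) • Pk T (i-1))))) v := by
    have h1 : gradient (fhat T) x =
        (InnerProductSpace.toDual ℝ (EuclideanSpace ℝ (Fin T))).symm (fderiv ℝ (fhat T) x) := rfl
    rw [hfhat.fderiv] at h1
    have h2 : gradient (fhat T) x j = @inner ℝ _ _ (gradient (fhat T) x) v := by
      rw [hv, EuclideanSpace.inner_single_right]
      simp
    rw [h2, h1, InnerProductSpace.toDual_symm_apply]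
  rw [hgradeq]
  simp only [ContinuousLinearMap.add_apply, ContinuousLinearMap.coe_sum',
    Finset.sum_apply, ContinuousLinearMap.sub_apply, ContinuousLinearMap.smul_apply,
    ContinuousLinearMap.neg_apply, hPkv, smul_eq_mul]
  have hhead : |-Psi 1 * (Phi' (coord x 0) * if 0 = (j:ℕ) then (1:ℝ) else 0)| ≤
      1.6488 * (if 0 = (j:ℕ) then (1:ℝ) else 0) := by
    rw [psi_one]
    split_ifs with h
    · rw [mul_one, mul_one, abs_mul, abs_neg, abs_one, one_mul,
        abs_of_nonneg (phi'_nonneg _)]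
      exact phi'_le _
    · simp
  have hsum : |∑ i ∈ Finset.Ico 1 T,
      (Psi (-coord x (i - 1)) * (Phi' (-coord x i) * -if i = (j:ℕ) then (1:ℝ) else 0) +
        Phi (-coord x i) * (Psi' (-coord x (i - 1)) * -if i - 1 = (j:ℕ) then (1:ℝ) else 0) -
        (Psi (coord x (i - 1)) * (Phi' (coord x i) * if i = (j:ℕ) then (1:ℝ) else 0) +
          Phi (coord x i) * (Psi' (coord x (i - 1)) * if i - 1 = (j:ℕ) then (1:ℝ) else 0)))| ≤
      18.43 * (if (j:ℕ) + 1 ∈ Finset.Ico 1 T then (1:ℝ) else 0) +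
      4.482 * (if (j:ℕ) ∈ Finset.Ico 1 T then (1:ℝ) else 0) := by
    refine (Finset.abs_sum_le_sum_abs _ _).trans ?_
    have hb : ∀ i ∈ Finset.Ico 1 T,
        |Psi (-coord x (i - 1)) * (Phi' (-coord x i) * -if i = (j:ℕ) then (1:ℝ) else 0) +
          Phi (-coord x i) * (Psi' (-coord x (i - 1)) * -if i - 1 = (j:ℕ) then (1:ℝ) else 0) -
          (Psi (coord x (i - 1)) * (Phi' (coord x i) * if i = (j:ℕ) then (1:ℝ) else 0) +
            Phi (coord x i) * (Psi' (coord x (i - 1)) * if i - 1 = (j:ℕ) then (1:ℝ) else 0))| ≤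
        18.43 * (if i = (j:ℕ) + 1 then (1:ℝ) else 0) + 4.482 * (if i = (j:ℕ) then (1:ℝ) else 0) := by
      intro i hi
      have h1i : 1 ≤ i := (Finset.mem_Ico.1 hi).1
      have hd : (if i - 1 = (j:ℕ) then (1:ℝ) else 0) = (if i = (j:ℕ) + 1 then (1:ℝ) else 0) :=
        if_congr (by omega) rfl rfl
      rw [hd]
      exact term_bound (coord x (i-1)) (coord x i) _ _
        (by split_ifs <;> simp) (by split_ifs <;> simp)
    refine (Finset.sum_le_sum hb).trans ?_
    rw [Finset.sum_add_distrib, ← Finset.mul_sum, ← Finset.mul_sum,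
      Finset.sum_ite_eq' (Finset.Ico 1 T) ((j:ℕ)+1) (fun _ => (1:ℝ)),
      Finset.sum_ite_eq' (Finset.Ico 1 T) ((j:ℕ)) (fun _ => (1:ℝ))]
  refine (abs_add_le _ _).trans (le_trans (add_le_add hhead hsum) ?_)
  by_cases hj0 : 0 = (j:ℕ)
  · rw [if_pos hj0, if_neg (by simp [← hj0] : ¬ ((j:ℕ) ∈ Finset.Ico 1 T))]
    split_ifs <;> norm_num
  · rw [if_neg hj0]
    split_ifs <;> norm_num
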